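/- Knabe's method: Let d, N, m be natural numbers with 3 ≤ m ≤ N, and let P 1, …, P (N−1) be complex d×d matrices such that each P j is a Hermitian projection (P jᴴ = P j and (P j) * (P j) = P j) and P j commutes with P k whenever |j − k| > 1. For 2 ≤ m' ≤ N and 1 ≤ j ≤ N − m' + 1 set h(j, m') = ∑_{k=j}^{j+m'−2} P k, and set H_N = ∑_{k=1}^{N−1} P k. Suppose δ : {2, …, m} → ℝ satisfies 0 ≤ δ m' ≤ 1 for all m', and for every 2 ≤ m' ≤ m and every 1 ≤ j ≤ N − m' + 1 the matrix (h(j, m'))² − (δ m') • h(j, m') is positive semidefinite. Let c = ((m−1)/(m−2)) • ((min over 2 ≤ m' ≤ m of δ m') − 1/(m−1)). Then (H_N)² − c • H_N is positive semidefinite; consequently, every nonzero eigenvalue λ of the Hermitian matrix H_N satisfies λ ≥ c. -/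

import Mathlib

open Matrix
open scoped ComplexOrder
namespace KnabeAux
variable {d : ℕ}

lemma psd_mul {A B : Matrix (Fin d) (Fin d) ℂ} (hA : Aᴴ = A) (hA2 : A * A = A)
    (hB : Bᴴ = B) (hB2 : B * B = B) (hcomm : A * B = B * A) : (A * B).PosSemidef := by
  have key : (A * B)ᴴ * (A * B) = A * B := by
    rw [conjTranspose_mul, hA, hB]
    calc B * A * (A * B) = B * (A * A) * B := by noncomm_ring
      _ = B * A * B := by rw [hA2]
      _ = A * B * B := by rw [hcomm]
      _ = A * (B * B) := by noncomm_ring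
      _ = A * B := by rw [hB2]
  rw [← key]
  exact posSemidef_conjTranspose_mul_self _

lemma psd_of_proj {A : Matrix (Fin d) (Fin d) ℂ} (hA : Aᴴ = A) (hA2 : A * A = A) :
    A.PosSemidef := by
  have := psd_mul hA hA2 hA hA2 rfl
  rwa [hA2] at this

lemma psd_smul {A : Matrix (Fin d) (Fin d) ℂ} (hA : A.PosSemidef) {r : ℝ} (hr : 0 ≤ r) :
    (r • A).PosSemidef := by
  refine Matrix.posSemidef_iff_dotProduct_mulVec.mpr ⟨?_, ?_⟩
  · unfold Matrix.IsHermitian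
    rw [conjTranspose_smul, star_trivial, hA.1.eq]
  · intro x
    rw [Matrix.smul_mulVec, dotProduct_smul]
    have h1 : (0:ℂ) ≤ (r : ℂ) := by exact_mod_cast hr
    calc (0:ℂ) = (r:ℂ) * 0 := by ring
      _ ≤ (r:ℂ) * (star x ⬝ᵥ A *ᵥ x) := mul_le_mul_of_nonneg_left (hA.dotProduct_mulVec_nonneg x) h1
      _ = r • (star x ⬝ᵥ A *ᵥ x) := by rw [Complex.real_smul]

lemma psd_sum {ι : Type*} {s : Finset ι} {f : ι → Matrix (Fin d) (Fin d) ℂ}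
    (h : ∀ i ∈ s, (f i).PosSemidef) : (∑ i ∈ s, f i).PosSemidef :=
  Finset.sum_induction f _ (fun _ _ ha hb => ha.add hb) Matrix.PosSemidef.zero h

lemma family_lin (P : ℕ → Matrix (Fin d) (Fin d) ℂ) (I J : Finset ℕ) (w : ℕ → Finset ℕ)
    (hw : ∀ j ∈ J, w j ⊆ I) :
    ∑ j ∈ J, ∑ k ∈ w j, P k = ∑ k ∈ I, ((J.filter (fun j => k ∈ w j)).card) • P k := by
  have h1 : ∀ j ∈ J, ∑ k ∈ w j, P k = ∑ k ∈ I, if k ∈ w j then P k else 0 := by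
    intro j hj
    rw [Finset.sum_ite_mem, Finset.inter_eq_right.mpr (hw j hj)]
  rw [Finset.sum_congr rfl h1, Finset.sum_comm]
  refine Finset.sum_congr rfl fun k _ => ?_
  rw [Finset.sum_ite, Finset.sum_const, Finset.sum_const_zero, add_zero]

lemma family_sq (P : ℕ → Matrix (Fin d) (Fin d) ℂ) (I J : Finset ℕ) (w : ℕ → Finset ℕ)
    (hw : ∀ j ∈ J, w j ⊆ I) :
    ∑ j ∈ J, (∑ k ∈ w j, P k) ^ 2
      = ∑ k ∈ I, ∑ l ∈ I, ((J.filter (fun j => k ∈ w j ∧ l ∈ w j)).card) • (P k * P l) := by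
  have h1 : ∀ j ∈ J, (∑ k ∈ w j, P k) ^ 2
      = ∑ k ∈ I, ∑ l ∈ I, if k ∈ w j ∧ l ∈ w j then P k * P l else 0 := by
    intro j hj
    have hs : ∑ k ∈ w j, P k = ∑ k ∈ I, if k ∈ w j then P k else 0 := by
      rw [Finset.sum_ite_mem, Finset.inter_eq_right.mpr (hw j hj)]
    rw [pow_two, hs, Finset.sum_mul_sum]
    refine Finset.sum_congr rfl fun k _ => Finset.sum_congr rfl fun l _ => ?_
    rw [ite_zero_mul_ite_zero]
  rw [Finset.sum_congr rfl h1, Finset.sum_comm]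
  refine Finset.sum_congr rfl fun k _ => ?_
  rw [Finset.sum_comm]
  refine Finset.sum_congr rfl fun l _ => ?_
  rw [Finset.sum_ite, Finset.sum_const, Finset.sum_const_zero, add_zero]

lemma cnt_spec (N m k l : ℕ) (hm : 3 ≤ m) (hmN : m ≤ N) (hk : 1 ≤ k) (hk' : k ≤ N - 1)
    (hl : 1 ≤ l) (hl' : l ≤ N - 1) :
    (k = l →
      ((Finset.Icc 1 (N-m+1)).filter
          (fun j => k ∈ Finset.Icc j (j+m-2) ∧ l ∈ Finset.Icc j (j+m-2))).card
      + ((Finset.Icc 2 (m-1)).filter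
          (fun m' => k ∈ Finset.Icc 1 (1+m'-2) ∧ l ∈ Finset.Icc 1 (1+m'-2))).card
      + ((Finset.Icc 2 (m-1)).filter
          (fun m' => k ∈ Finset.Icc (N-m'+1) (N-m'+1+m'-2)
            ∧ l ∈ Finset.Icc (N-m'+1) (N-m'+1+m'-2))).card = m - 1) ∧
    ((k + 1 = l ∨ l + 1 = k) →
      ((Finset.Icc 1 (N-m+1)).filter
          (fun j => k ∈ Finset.Icc j (j+m-2) ∧ l ∈ Finset.Icc j (j+m-2))).card
      + ((Finset.Icc 2 (m-1)).filter
          (fun m' => k ∈ Finset.Icc 1 (1+m'-2) ∧ l ∈ Finset.Icc 1 (1+m'-2))).card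
      + ((Finset.Icc 2 (m-1)).filter
          (fun m' => k ∈ Finset.Icc (N-m'+1) (N-m'+1+m'-2)
            ∧ l ∈ Finset.Icc (N-m'+1) (N-m'+1+m'-2))).card = m - 2) ∧
    ((k + 1 < l ∨ l + 1 < k) →
      ((Finset.Icc 1 (N-m+1)).filter
          (fun j => k ∈ Finset.Icc j (j+m-2) ∧ l ∈ Finset.Icc j (j+m-2))).card
      + ((Finset.Icc 2 (m-1)).filter
          (fun m' => k ∈ Finset.Icc 1 (1+m'-2) ∧ l ∈ Finset.Icc 1 (1+m'-2))).card
      + ((Finset.Icc 2 (m-1)).filter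
          (fun m' => k ∈ Finset.Icc (N-m'+1) (N-m'+1+m'-2)
            ∧ l ∈ Finset.Icc (N-m'+1) (N-m'+1+m'-2))).card ≤ m - 2) := by
  have e1 : (Finset.Icc 1 (N-m+1)).filter
      (fun j => k ∈ Finset.Icc j (j+m-2) ∧ l ∈ Finset.Icc j (j+m-2))
      = Finset.Icc (max 1 (max k l + 2 - m)) (min (min k l) (N-m+1)) := by
    ext j
    simp only [Finset.mem_filter, Finset.mem_Icc]
    omega
  have e2 : (Finset.Icc 2 (m-1)).filter
      (fun m' => k ∈ Finset.Icc 1 (1+m'-2) ∧ l ∈ Finset.Icc 1 (1+m'-2))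
      = Finset.Icc (max 2 (max k l + 1)) (m-1) := by
    ext m'
    simp only [Finset.mem_filter, Finset.mem_Icc]
    omega
  have e3 : (Finset.Icc 2 (m-1)).filter
      (fun m' => k ∈ Finset.Icc (N-m'+1) (N-m'+1+m'-2)
        ∧ l ∈ Finset.Icc (N-m'+1) (N-m'+1+m'-2))
      = Finset.Icc (max 2 (N - min k l + 1)) (m-1) := by
    ext m'
    simp only [Finset.mem_filter, Finset.mem_Icc]
    omega
  rw [e1, e2, e3, Nat.card_Icc, Nat.card_Icc, Nat.card_Icc]
  refine ⟨fun h => ?_, fun h => ?_, fun h => ?_⟩ <;> omega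

end KnabeAux

/-- Knabe's method (Theorem 2): for a sum `H_N = ∑_{k=1}^{N-1} P k` of Hermitian projections
with `[P j, P k] = 0` for `|j - k| > 1`, if each sub-system Hamiltonian
`h j m' = ∑_{k=j}^{j+m'-2} P k` (for `2 ≤ m' ≤ m`) satisfies the gap inequality
`(h j m')² ≥ δ m' • h j m'` with `0 ≤ δ m' ≤ 1`, then `H_N² ≥ c • H_N` with
`c = ((m-1)/(m-2)) ((min_{2 ≤ m' ≤ m} δ m') - 1/(m-1))`; consequently every nonzero eigenvalue
of `H_N` is at least `c`. -/
theorem knabe_method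
    (d N m : ℕ) (hm : 3 ≤ m) (hmN : m ≤ N)
    (P : ℕ → Matrix (Fin d) (Fin d) ℂ)
    (hP_herm : ∀ j ∈ Finset.Icc 1 (N - 1), (P j)ᴴ = P j)
    (hP_proj : ∀ j ∈ Finset.Icc 1 (N - 1), P j * P j = P j)
    (hP_comm : ∀ j ∈ Finset.Icc 1 (N - 1), ∀ k ∈ Finset.Icc 1 (N - 1),
      1 < (j : ℤ) - k ∨ 1 < (k : ℤ) - j → P j * P k = P k * P j)
    (δ : ℕ → ℝ)
    (hδ : ∀ m' ∈ Finset.Icc 2 m, 0 ≤ δ m' ∧ δ m' ≤ 1)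
    (hgap : ∀ m' ∈ Finset.Icc 2 m, ∀ j ∈ Finset.Icc 1 (N - m' + 1),
      ((∑ k ∈ Finset.Icc j (j + m' - 2), P k) ^ 2
        - δ m' • ∑ k ∈ Finset.Icc j (j + m' - 2), P k).PosSemidef)
    (c : ℝ)
    (hc : c = ((m - 1 : ℝ) / (m - 2))
      * ((Finset.Icc 2 m).inf' (Finset.nonempty_Icc.mpr (by omega)) δ - 1 / (m - 1))) :
    ((∑ k ∈ Finset.Icc 1 (N - 1), P k) ^ 2
      - c • ∑ k ∈ Finset.Icc 1 (N - 1), P k).PosSemidef ∧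
    ∀ (hH : (∑ k ∈ Finset.Icc 1 (N - 1), P k).IsHermitian) (i : Fin d),
      hH.eigenvalues i ≠ 0 → c ≤ hH.eigenvalues i := by
  classical
  have hne : (Finset.Icc 2 m).Nonempty := Finset.nonempty_Icc.mpr (by omega)
  set I : Finset ℕ := Finset.Icc 1 (N - 1) with hIdef
  set Hm : Matrix (Fin d) (Fin d) ℂ := ∑ k ∈ I, P k with hHmdef
  set δ₀ : ℝ := (Finset.Icc 2 m).inf' hne δ with hδ₀def
  have hc2 : c = ((m - 1 : ℝ) / (m - 2)) * (δ₀ - 1 / (m - 1)) := hc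
  have hm3 : (3:ℝ) ≤ (m:ℝ) := by exact_mod_cast hm
  have hm2ne : ((m:ℝ) - 2) ≠ 0 := by linarith
  have hm1ne : ((m:ℝ) - 1) ≠ 0 := by linarith
  have hc' : ((m:ℝ) - 2) * c = ((m:ℝ) - 1) * δ₀ - 1 := by
    rw [hc2]; field_simp
  have hδ₀_le : ∀ m' ∈ Finset.Icc 2 m, δ₀ ≤ δ m' := fun m' h => Finset.inf'_le δ h
  have hPpsd : ∀ k ∈ I, (P k).PosSemidef := fun k hk =>
    KnabeAux.psd_of_proj (hP_herm k hk) (hP_proj k hk)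
  -- families
  set J1 : Finset ℕ := Finset.Icc 1 (N - m + 1) with hJ1
  set J2 : Finset ℕ := Finset.Icc 2 (m - 1) with hJ2
  set w1 : ℕ → Finset ℕ := fun j => Finset.Icc j (j + m - 2) with hw1def
  set w2 : ℕ → Finset ℕ := fun m' => Finset.Icc 1 (1 + m' - 2) with hw2def
  set w3 : ℕ → Finset ℕ := fun m' => Finset.Icc (N - m' + 1) (N - m' + 1 + m' - 2) with hw3def
  have hw1 : ∀ j ∈ J1, w1 j ⊆ I := by
    intro j hj k hk
    simp only [hJ1, hw1def, hIdef, Finset.mem_Icc] at *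
    omega
  have hw2 : ∀ j ∈ J2, w2 j ⊆ I := by
    intro j hj k hk
    simp only [hJ2, hw2def, hIdef, Finset.mem_Icc] at *
    omega
  have hw3 : ∀ j ∈ J2, w3 j ⊆ I := by
    intro j hj k hk
    simp only [hJ2, hw3def, hIdef, Finset.mem_Icc] at *
    omega

  -- PSD of each gap term
  have gap_term : ∀ (j m' : ℕ), m' ∈ Finset.Icc 2 m → j ∈ Finset.Icc 1 (N - m' + 1) →
      Finset.Icc j (j + m' - 2) ⊆ I →
      ((∑ k ∈ Finset.Icc j (j + m' - 2), P k) ^ 2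
        - δ₀ • ∑ k ∈ Finset.Icc j (j + m' - 2), P k).PosSemidef := by
    intro j m' hm' hj hsub
    have h1 := hgap m' hm' j hj
    have h2 : (0:ℝ) ≤ δ m' - δ₀ := sub_nonneg.mpr (hδ₀_le m' hm')
    have h3 : (∑ k ∈ Finset.Icc j (j + m' - 2), P k).PosSemidef :=
      KnabeAux.psd_sum fun k hk => hPpsd k (hsub hk)
    have hsplit : (∑ k ∈ Finset.Icc j (j + m' - 2), P k) ^ 2
        - δ₀ • ∑ k ∈ Finset.Icc j (j + m' - 2), P k
        = ((∑ k ∈ Finset.Icc j (j + m' - 2), P k) ^ 2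
            - δ m' • ∑ k ∈ Finset.Icc j (j + m' - 2), P k)
          + (δ m' - δ₀) • ∑ k ∈ Finset.Icc j (j + m' - 2), P k := by
      rw [sub_smul]; abel
    rw [hsplit]
    exact h1.add (KnabeAux.psd_smul h3 h2)
  -- the count function
  set cnt : ℕ → ℕ → ℕ := fun k l =>
      (J1.filter (fun j => k ∈ w1 j ∧ l ∈ w1 j)).card
    + (J2.filter (fun j => k ∈ w2 j ∧ l ∈ w2 j)).card
    + (J2.filter (fun j => k ∈ w3 j ∧ l ∈ w3 j)).card with hcntdef
  have hcnt_spec : ∀ k, 1 ≤ k → k ≤ N - 1 → ∀ l, 1 ≤ l → l ≤ N - 1 →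
      (k = l → cnt k l = m - 1) ∧
      ((k + 1 = l ∨ l + 1 = k) → cnt k l = m - 2) ∧
      ((k + 1 < l ∨ l + 1 < k) → cnt k l ≤ m - 2) := by
    intro k hk1 hk2 l hl1 hl2
    have := KnabeAux.cnt_spec N m k l hm hmN hk1 hk2 hl1 hl2
    simp only [hcntdef, hJ1, hJ2, hw1def, hw2def, hw3def]
    exact this
  -- the remainder matrix D
  set D : Matrix (Fin d) (Fin d) ℂ := ∑ k ∈ I, ∑ l ∈ I,
      ((((m:ℝ) - 2) + (if k = l then 1 else 0) - (cnt k l : ℝ)) • (P k * P l)) with hDdef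
  have hD : D.PosSemidef := by
    rw [hDdef]
    refine KnabeAux.psd_sum fun k hk => KnabeAux.psd_sum fun l hl => ?_
    have hk' := Finset.mem_Icc.mp hk
    have hl' := Finset.mem_Icc.mp hl
    have spec := hcnt_spec k hk'.1 hk'.2 l hl'.1 hl'.2
    by_cases hkl : k = l
    · have h1 : cnt k l = m - 1 := spec.1 hkl
      have hco : ((m:ℝ) - 2) + (if k = l then (1:ℝ) else 0) - (cnt k l : ℝ) = 0 := by
        rw [if_pos hkl, h1, Nat.cast_sub (by omega : 1 ≤ m)]
        push_cast
        ring
      rw [hco, zero_smul]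
      exact Matrix.PosSemidef.zero
    · by_cases hadj : k + 1 = l ∨ l + 1 = k
      · have h1 : cnt k l = m - 2 := spec.2.1 hadj
        have hco : ((m:ℝ) - 2) + (if k = l then (1:ℝ) else 0) - (cnt k l : ℝ) = 0 := by
          rw [if_neg hkl, h1, Nat.cast_sub (by omega : 2 ≤ m)]
          push_cast
          ring
        rw [hco, zero_smul]
        exact Matrix.PosSemidef.zero
      · have hdist : k + 1 < l ∨ l + 1 < k := by omega
        have h1 : cnt k l ≤ m - 2 := spec.2.2 hdist
        have hco : 0 ≤ ((m:ℝ) - 2) + (if k = l then (1:ℝ) else 0) - (cnt k l : ℝ) := by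
          rw [if_neg hkl]
          have h2 : (cnt k l : ℝ) ≤ ((m - 2 : ℕ) : ℝ) := Nat.cast_le.mpr h1
          rw [Nat.cast_sub (by omega : 2 ≤ m)] at h2
          push_cast at h2
          linarith
        have hcm : P k * P l = P l * P k := hP_comm k hk l hl (by omega)
        exact KnabeAux.psd_smul
          (KnabeAux.psd_mul (hP_herm k hk) (hP_proj k hk) (hP_herm l hl) (hP_proj l hl) hcm) hco
  -- the gap sum G
  set G : Matrix (Fin d) (Fin d) ℂ :=
      (∑ j ∈ J1, ((∑ k ∈ w1 j, P k) ^ 2 - δ₀ • ∑ k ∈ w1 j, P k))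
    + (∑ j ∈ J2, ((∑ k ∈ w2 j, P k) ^ 2 - δ₀ • ∑ k ∈ w2 j, P k))
    + (∑ j ∈ J2, ((∑ k ∈ w3 j, P k) ^ 2 - δ₀ • ∑ k ∈ w3 j, P k)) with hGdef
  have hG : G.PosSemidef := by
    rw [hGdef]
    refine ((KnabeAux.psd_sum ?_).add (KnabeAux.psd_sum ?_)).add (KnabeAux.psd_sum ?_)
    · intro j hj
      have hj' := Finset.mem_Icc.mp hj
      exact gap_term j m (Finset.mem_Icc.mpr (by omega)) (Finset.mem_Icc.mpr (by omega))
        (hw1 j hj)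
    · intro j hj
      have hj' := Finset.mem_Icc.mp hj
      exact gap_term 1 j (Finset.mem_Icc.mpr (by omega)) (Finset.mem_Icc.mpr (by omega))
        (hw2 j hj)
    · intro j hj
      have hj' := Finset.mem_Icc.mp hj
      exact gap_term (N - j + 1) j (Finset.mem_Icc.mpr (by omega))
        (Finset.mem_Icc.mpr (by omega)) (hw3 j hj)
  -- sum of squares over all windows
  have hB : (∑ j ∈ J1, (∑ k ∈ w1 j, P k) ^ 2) + (∑ j ∈ J2, (∑ k ∈ w2 j, P k) ^ 2)
      + (∑ j ∈ J2, (∑ k ∈ w3 j, P k) ^ 2)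
      = ∑ k ∈ I, ∑ l ∈ I, ((cnt k l : ℝ) • (P k * P l)) := by
    rw [KnabeAux.family_sq P I J1 w1 hw1, KnabeAux.family_sq P I J2 w2 hw2,
      KnabeAux.family_sq P I J2 w3 hw3, ← Finset.sum_add_distrib, ← Finset.sum_add_distrib]
    refine Finset.sum_congr rfl fun k _ => ?_
    rw [← Finset.sum_add_distrib, ← Finset.sum_add_distrib]
    refine Finset.sum_congr rfl fun l _ => ?_
    rw [← add_nsmul, ← add_nsmul, ← Nat.cast_smul_eq_nsmul ℝ]
  -- linear sum over all windows
  have hLL : (∑ j ∈ J1, ∑ k ∈ w1 j, P k) + (∑ j ∈ J2, ∑ k ∈ w2 j, P k)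
      + (∑ j ∈ J2, ∑ k ∈ w3 j, P k) = (m - 1 : ℕ) • Hm := by
    rw [KnabeAux.family_lin P I J1 w1 hw1, KnabeAux.family_lin P I J2 w2 hw2,
      KnabeAux.family_lin P I J2 w3 hw3, ← Finset.sum_add_distrib, ← Finset.sum_add_distrib,
      hHmdef, Finset.smul_sum]
    refine Finset.sum_congr rfl fun k hk => ?_
    rw [← add_nsmul, ← add_nsmul]
    congr 1
    have hk' := Finset.mem_Icc.mp hk
    have := (KnabeAux.cnt_spec N m k k hm hmN hk'.1 hk'.2 hk'.1 hk'.2).1 rfl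
    simp only [hJ1, hJ2, hw1def, hw2def, hw3def]
    simpa only [and_self] using this
  -- G = B - δ₀ • LL
  have hGB : G = ((∑ j ∈ J1, (∑ k ∈ w1 j, P k) ^ 2) + (∑ j ∈ J2, (∑ k ∈ w2 j, P k) ^ 2)
      + (∑ j ∈ J2, (∑ k ∈ w3 j, P k) ^ 2))
      - δ₀ • ((∑ j ∈ J1, ∑ k ∈ w1 j, P k) + (∑ j ∈ J2, ∑ k ∈ w2 j, P k)
        + (∑ j ∈ J2, ∑ k ∈ w3 j, P k)) := by
    rw [hGdef]
    simp only [Finset.sum_sub_distrib, smul_add, Finset.smul_sum]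
    abel
  -- combine D with the sum of squares
  have hDBsum : D + ∑ k ∈ I, ∑ l ∈ I, ((cnt k l : ℝ) • (P k * P l))
      = ((m:ℝ) - 2) • Hm ^ 2 + Hm := by
    rw [hDdef, ← Finset.sum_add_distrib]
    have step1 : ∀ k ∈ I, (∑ l ∈ I,
          ((((m:ℝ) - 2) + (if k = l then 1 else 0) - (cnt k l : ℝ)) • (P k * P l)))
        + (∑ l ∈ I, ((cnt k l : ℝ) • (P k * P l)))
        = (∑ l ∈ I, (((m:ℝ) - 2) • (P k * P l)))
          + ∑ l ∈ I, (if k = l then P k * P l else 0) := by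
      intro k _
      rw [← Finset.sum_add_distrib, ← Finset.sum_add_distrib]
      refine Finset.sum_congr rfl fun l _ => ?_
      rw [← add_smul]
      have : ((m:ℝ) - 2) + (if k = l then 1 else 0) - (cnt k l : ℝ) + (cnt k l : ℝ)
          = ((m:ℝ) - 2) + (if k = l then 1 else 0) := by ring
      rw [this, add_smul, ite_smul, one_smul, zero_smul]
    rw [Finset.sum_congr rfl step1, Finset.sum_add_distrib]
    congr 1
    · rw [pow_two, hHmdef, Finset.sum_mul_sum]
      simp only [Finset.smul_sum]
    · rw [hHmdef]
      refine Finset.sum_congr rfl fun k hk => ?_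
      rw [Finset.sum_ite_eq, if_pos hk, hP_proj k hk]
  -- the key identity
  have key : ((m:ℝ) - 2) • (Hm ^ 2 - c • Hm) = D + G := by
    have hLLs : δ₀ • ((m - 1 : ℕ) • Hm) = (((m:ℝ) - 1) * δ₀) • Hm := by
      rw [← Nat.cast_smul_eq_nsmul ℝ, smul_smul, Nat.cast_sub (by omega : 1 ≤ m),
        Nat.cast_one, mul_comm]
    calc ((m:ℝ) - 2) • (Hm ^ 2 - c • Hm)
        = ((m:ℝ) - 2) • Hm ^ 2 + Hm - (((m:ℝ) - 1) * δ₀) • Hm := by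
          rw [smul_sub, smul_smul, hc']
          module
      _ = (D + ∑ k ∈ I, ∑ l ∈ I, ((cnt k l : ℝ) • (P k * P l)))
          - δ₀ • ((m - 1 : ℕ) • Hm) := by rw [hDBsum, hLLs]
      _ = D + G := by rw [hGB, hB, hLL]; abel
  -- conclusion, part 1
  have PSD1 : (Hm ^ 2 - c • Hm).PosSemidef := by
    have hrw : Hm ^ 2 - c • Hm = ((m:ℝ) - 2)⁻¹ • (((m:ℝ) - 2) • (Hm ^ 2 - c • Hm)) := by
      rw [smul_smul, inv_mul_cancel₀ hm2ne, one_smul]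
    rw [hrw, key]
    exact KnabeAux.psd_smul (hD.add hG) (inv_nonneg.mpr (by linarith))
  refine ⟨PSD1, ?_⟩
  -- part 2: eigenvalue bound
  intro hHerm i hne0
  have hPSDH : Hm.PosSemidef := KnabeAux.psd_sum hPpsd
  set lam := hHerm.eigenvalues i with hlam
  set v : Fin d → ℂ := ⇑(hHerm.eigenvectorBasis i) with hv
  have hlamnn : 0 ≤ lam := hPSDH.eigenvalues_nonneg i
  have hmv : Hm *ᵥ v = lam • v := hHerm.mulVec_eigenvectorBasis i
  have hv1 : star v ⬝ᵥ v = 1 := by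
    have h2 : (inner ℂ (hHerm.eigenvectorBasis i) (hHerm.eigenvectorBasis i) : ℂ) = 1 := by
      rw [inner_self_eq_norm_sq_to_K, hHerm.eigenvectorBasis.orthonormal.1 i]
      norm_num
    rw [dotProduct_comm]
    exact h2
  have hq := PSD1.dotProduct_mulVec_nonneg v
  have hmul : (Hm ^ 2 - c • Hm) *ᵥ v = ((lam * lam - c * lam : ℝ) : ℂ) • v := by
    rw [sub_mulVec, pow_two, ← mulVec_mulVec, hmv, mulVec_smul, hmv,
      Matrix.smul_mulVec, hmv]
    ext x
    simp [Pi.smul_apply, Complex.real_smul]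
    ring
  rw [hmul, dotProduct_smul, hv1, smul_eq_mul, mul_one] at hq
  have hre : (0:ℝ) ≤ lam * lam - c * lam := by exact_mod_cast hq
  have hlp : 0 < lam := lt_of_le_of_ne hlamnn (Ne.symm hne0)
  nlinarith
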